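/- arXiv:math/9812166 — 2 statements merged into one kernel-verified Lean document; each statement's English description precedes it below -/
import Mathlib

section
/- Let E be an entire function such that conj(E(conj z)) = ε·E(z−i) for all z ∈ ℂ, for some constant ε with |ε| = 1, and let w ∈ ℂ satisfy E(w) = 0. Then for every z ∈ ℂ with z ≠ conj(w) − i, the identity conj(E(w+i))·K_E(w, z+i) = −conj(E(w−i))·K_E(w+i, z) holds. -/
open Complex ComplexConjugate

/-- The de Branges reproducing kernel associated with an entire function `E`. -/
noncomputable def KE (E : ℂ → ℂ) (w z : ℂ) : ℂ :=
  (E z * conj (E w) - conj (E (conj z)) * E (conj w)) / (2 * Real.pi * I * (conj w - z))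

theorem stmt_4 (E : ℂ → ℂ) (ε : ℂ)
    (hE : Differentiable ℂ E)
    (hε : ‖ε‖ = 1)
    (hfe : ∀ z : ℂ, conj (E (conj z)) = ε * E (z - I))
    (w : ℂ) (hw : E w = 0) :
    ∀ z : ℂ, z ≠ conj w - I →
      conj (E (w + I)) * KE E w (z + I) = -conj (E (w - I)) * KE E (w + I) z := by
  intro z hz
  have hεne : ε ≠ 0 := by
    intro h; rw [h] at hε; simp at hε
  have hεc : ε * conj ε = 1 := by
    rw [Complex.mul_conj, Complex.normSq_eq_norm_sq, hε]; norm_num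
  have h1 : conj (E (conj (z + I))) = ε * E z := by
    have := hfe (z + I); simpa using this
  have h2 : E (conj w - I) = 0 := by
    have := hfe (conj w)
    rw [Complex.conj_conj, hw] at this
    simp at this
    exact this.resolve_left hεne
  have h3 : ε * E (conj w) = conj (E (w - I)) := by
    have := congrArg conj (hfe w)
    rw [Complex.conj_conj, map_mul] at this
    calc ε * E (conj w) = ε * (conj ε * conj (E (w - I))) := by rw [← this]
      _ = (ε * conj ε) * conj (E (w - I)) := by ring
      _ = conj (E (w - I)) := by rw [hεc, one_mul]
  have hcwI : conj (w + I) = conj w - I := by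
    simp [map_add, Complex.conj_I, sub_eq_add_neg]
  have hd : conj w - (z + I) ≠ 0 := by
    refine sub_ne_zero_of_ne ?_
    intro h; exact hz (by rw [h]; ring)
  have hd2 : conj (w + I) - z ≠ 0 := by
    rw [hcwI]
    intro h
    apply hd
    rw [sub_eq_zero] at h ⊢
    rw [← h]; ring
  have hpi : (2 * (Real.pi : ℂ) * I) ≠ 0 := by
    simp [Real.pi_ne_zero, Complex.I_ne_zero]
  unfold KE
  rw [hw, h1, hcwI, h2]
  rw [map_zero, mul_zero, mul_zero, zero_sub]
  have hden : (starRingEnd ℂ) w - (z + I) = (starRingEnd ℂ) w - I - z := by ring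
  have hD : 2 * (Real.pi : ℂ) * I * ((starRingEnd ℂ) w - I - z) ≠ 0 :=
    mul_ne_zero hpi (by rw [← hden]; exact hd)
  rw [hden, mul_div_assoc', mul_div_assoc', div_eq_div_iff hD hD]
  linear_combination (-(conj (E (w + I)) * E z *
    (2 * (Real.pi : ℂ) * I * (conj w - I - z)))) * h3
end

section
/- Let B be a function analytic on the upper half-plane Im z > 0 with |B(z)| ≤ 1 there. Assume that for every positive integer r, all points w₁,…,w_r with Im w_α > 0, and all complex numbers c₁,…,c_r, the sum ∑_{α,β=1}^r c_α·conj(c_β)·(1 − B(w_α)·conj(B(w_β)))/(2πi(conj(w_β) − w_α − i)) is a nonnegative real number. Then B has an analytic continuation to the half-plane Im z > −1/2 satisfying |B(z)| ≤ 1 for all z with Im z > −1/2. -/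
open Complex ComplexConjugate
open scoped ComplexOrder

open MeasureTheory Set Filter

noncomputable section
namespace S7

lemma norm_cexp_mul' (c : ℂ) (t : ℝ) : ‖Complex.exp (c * t)‖ = Real.exp (c.re * t) := by
  rw [Complex.norm_exp]
  norm_num [Complex.mul_re]

lemma integrableOn_cexp_Ioi {c : ℂ} (hc : c.re < 0) :
    IntegrableOn (fun t : ℝ => Complex.exp (c * t)) (Ioi 0) := by
  apply Integrable.mono' (g := fun t : ℝ => Real.exp (-(-c.re) * t))
  · simpa [IntegrableOn] using exp_neg_integrableOn_Ioi 0 (by linarith : (0:ℝ) < -c.re)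
  · exact (Complex.continuous_exp.comp (by continuity)).aestronglyMeasurable
  · filter_upwards with t
    rw [norm_cexp_mul']; simp

lemma integral_cexp_Ioi {c : ℂ} (hc : c.re < 0) :
    ∫ t in Ioi (0:ℝ), Complex.exp (c * t) = -c⁻¹ := by
  have hc0 : c ≠ 0 := fun h => by simp [h] at hc
  have key : ∫ t in Ioi (0:ℝ), Complex.exp (c * t) = 0 - (Complex.exp (c * (0:ℝ)) / c) := by
    apply integral_Ioi_of_hasDerivAt_of_tendsto' (f := fun t : ℝ => Complex.exp (c * t) / c)
    · intro x _
      have h1 : HasDerivAt (fun z : ℂ => Complex.exp (c * z) / c) (Complex.exp (c * x)) x := by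
        have := (((hasDerivAt_id (x:ℂ)).const_mul c).cexp).div_const c
        simpa [mul_comm, mul_div_assoc, mul_div_cancel_left₀ _ hc0] using this
      exact h1.comp_ofReal
    · exact integrableOn_cexp_Ioi hc
    · rw [show (0:ℂ) = 0 / c by simp]
      apply Tendsto.div_const
      rw [tendsto_zero_iff_norm_tendsto_zero]
      simp only [norm_cexp_mul']
      exact Real.tendsto_exp_atBot.comp
        (tendsto_id.atTop_mul_const_of_neg hc |>.congr (fun x => mul_comm x c.re))
  rw [key]
  simp [div_eq_mul_inv]

/-- the measure: Lebesgue on (0,∞) -/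
def μ0 : Measure ℝ := volume.restrict (Ioi 0)

/-- exponential wave function -/
def efun (w : ℂ) : ℝ → ℂ := fun t => Complex.exp ((I * w - 2⁻¹) * t)

lemma efun_re (w : ℂ) : (I * w - 2⁻¹).re = -w.im - 2⁻¹ := by
  simp [Complex.sub_re, Complex.mul_re]

lemma norm_efun (w : ℂ) (t : ℝ) : ‖efun w t‖ = Real.exp ((-w.im - 2⁻¹) * t) := by
  rw [efun, norm_cexp_mul', efun_re]

lemma efun_conj (w : ℂ) (t : ℝ) : conj (efun (-(conj w)) t) = efun w t := by
  rw [efun, efun, ← Complex.exp_conj]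
  congr 1
  simp only [map_mul, map_sub]
  rw [Complex.conj_ofReal]
  congr 2
  · simp
  · simp [map_inv₀, map_ofNat]

lemma memℒp_efun {w : ℂ} (hw : -2⁻¹ < w.im) : MemLp (efun w) 2 μ0 := by
  have hmeas : AEStronglyMeasurable (efun w) μ0 :=
    (Complex.continuous_exp.comp (by continuity)).aestronglyMeasurable
  rw [memLp_two_iff_integrable_sq_norm hmeas]
  have : IntegrableOn (fun t : ℝ => Complex.exp ((2 * (-w.im - 2⁻¹) : ℝ) * (t:ℝ))) (Ioi 0) := by
    apply integrableOn_cexp_Ioi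
    rw [Complex.ofReal_re]
    nlinarith
  have h2 := this.norm
  apply Integrable.congr h2
  filter_upwards with t
  rw [norm_cexp_mul', norm_efun, Complex.ofReal_re, sq, ← Real.exp_add]
  ring_nf


open Classical in
def eV (w : ℂ) : Lp ℂ 2 μ0 := if h : -2⁻¹ < w.im then (memℒp_efun h).toLp _ else 0

lemma eV_coe {w : ℂ} (hw : -2⁻¹ < w.im) : (eV w : ℝ → ℂ) =ᵐ[μ0] efun w := by
  rw [eV, dif_pos hw]
  exact MemLp.coeFn_toLp _

lemma inner_eV {v w : ℂ} (hv : -2⁻¹ < v.im) (hw : -2⁻¹ < w.im) :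
    (inner ℂ (eV v) (eV w) : ℂ) = (1 + I * (conj v) - I * w)⁻¹ := by
  rw [L2.inner_def]
  have : ∫ a, (inner ℂ ((eV v : ℝ → ℂ) a) ((eV w : ℝ → ℂ) a) : ℂ) ∂μ0
      = ∫ t, conj (efun v t) * efun w t ∂μ0 := by
    apply integral_congr_ae
    filter_upwards [eV_coe hv, eV_coe hw] with t h1 h2
    rw [h1, h2]; exact RCLike.inner_apply' _ _
  rw [this]
  have hker : ∀ t : ℝ, conj (efun v t) * efun w t
      = Complex.exp ((I * w - I * conj v - 1) * t) := by
    intro t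
    rw [efun, efun, ← Complex.exp_conj, ← Complex.exp_add]
    congr 1
    simp only [map_mul, map_sub]
    rw [Complex.conj_ofReal]
    simp only [Complex.conj_I]
    push_cast
    rw [show (starRingEnd ℂ) 2⁻¹ = 2⁻¹ by simp [map_inv₀, map_ofNat]]
    ring
  simp only [hker]
  rw [show μ0 = volume.restrict (Ioi 0) from rfl, integral_cexp_Ioi]
  · rw [show (1 : ℂ) + I * conj v - I * w = -(I * w - I * conj v - 1) by ring, neg_inv]
  · have h1 : (I * w).re = -w.im := by simp [Complex.mul_re]
    have h2 : (I * conj v).re = v.im := by simp [Complex.mul_re]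
    simp only [Complex.sub_re, h1, h2, Complex.one_re]
    linarith


/-- evaluation functional -/
def Fn (v : Lp ℂ 2 μ0) (z : ℂ) : ℂ := inner ℂ (eV (-(conj z))) v

lemma im_neg_conj (z : ℂ) : (-(conj z)).im = z.im := by simp

lemma integrable_efun_mul (v : Lp ℂ 2 μ0) {w : ℂ} (hw : -2⁻¹ < w.im) :
    Integrable (fun t => efun w t * (v : ℝ → ℂ) t) μ0 := by
  have h := L2.integrable_inner (𝕜 := ℂ) (eV (-(conj w))) v
  apply Integrable.congr h
  filter_upwards [eV_coe (by rw [im_neg_conj]; exact hw : -2⁻¹ < (-(conj w)).im)] with t ht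
  rw [show (inner ℂ ((eV (-(conj w)) : ℝ → ℂ) t) ((v : ℝ → ℂ) t) : ℂ)
    = conj ((eV (-(conj w)) : ℝ → ℂ) t) * (v : ℝ → ℂ) t from RCLike.inner_apply' _ _, ht, efun_conj]

lemma Fn_integral (v : Lp ℂ 2 μ0) {z : ℂ} (hz : -2⁻¹ < z.im) :
    Fn v z = ∫ t, efun z t * (v : ℝ → ℂ) t ∂μ0 := by
  rw [Fn, L2.inner_def]
  apply integral_congr_ae
  filter_upwards [eV_coe (by rw [im_neg_conj]; exact hz : -2⁻¹ < (-(conj z)).im)] with t ht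
  rw [show (inner ℂ ((eV (-(conj z)) : ℝ → ℂ) t) ((v : ℝ → ℂ) t) : ℂ)
    = conj ((eV (-(conj z)) : ℝ → ℂ) t) * (v : ℝ → ℂ) t from RCLike.inner_apply' _ _, ht, efun_conj]

lemma Fn_eV_I {z : ℂ} (hz : -2⁻¹ < z.im) : Fn (eV I) z = (2 - I * z)⁻¹ := by
  rw [Fn, inner_eV (by rw [im_neg_conj]; exact hz) (by norm_num : -2⁻¹ < (I:ℂ).im)]
  congr 1
  rw [show (starRingEnd ℂ) (-(conj z)) = -z by simp]
  ring_nf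
  rw [Complex.I_sq]
  ring

lemma two_sub_I_mul_ne {z : ℂ} (hz : -2⁻¹ < z.im) : (2 : ℂ) - I * z ≠ 0 := by
  intro h
  have : ((2:ℂ) - I * z).re = 0 := by rw [h]; rfl
  simp [Complex.sub_re, Complex.mul_re] at this
  linarith

lemma Fn_differentiableOn (v : Lp ℂ 2 μ0) :
    DifferentiableOn ℂ (Fn v) {z : ℂ | -2⁻¹ < z.im} := by
  have hopen : IsOpen {z : ℂ | -2⁻¹ < z.im} := isOpen_lt continuous_const Complex.continuous_im
  intro z₀ hz₀
  apply DifferentiableAt.differentiableWithinAt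
  set ε : ℝ := (z₀.im + 2⁻¹) / 2 with hε
  have hεpos : 0 < ε := by simp only [hε]; simp only [mem_setOf_eq] at hz₀; linarith
  -- the dominating function
  set wb : ℂ := I * ((ε/2 : ℝ) - 2⁻¹ : ℝ) with hwb
  have hwbim : -2⁻¹ < wb.im := by
    rw [hwb]; simp; linarith
  have hbound_int : Integrable (fun t => (2/ε) * ‖efun wb t * (v : ℝ → ℂ) t‖) μ0 :=
    ((integrable_efun_mul v hwbim).norm).const_mul _
  -- derivative exists
  have key : HasDerivAt (fun z => ∫ t, efun z t * (v : ℝ → ℂ) t ∂μ0)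
      (∫ t, (I * t) * efun z₀ t * (v : ℝ → ℂ) t ∂μ0) z₀ := by
    have := hasDerivAt_integral_of_dominated_loc_of_deriv_le (μ := μ0)
      (F := fun z t => efun z t * (v : ℝ → ℂ) t)
      (F' := fun z t => (I * t) * efun z t * (v : ℝ → ℂ) t)
      (x₀ := z₀) (bound := fun t => (2/ε) * ‖efun wb t * (v : ℝ → ℂ) t‖)
      (Metric.ball_mem_nhds z₀ hεpos) ?_ ?_ ?_ ?_ hbound_int ?_
    · exact this.2
    · filter_upwards with z
      exact ((Complex.continuous_exp.comp (by continuity)).aestronglyMeasurable).mul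
        (Lp.aestronglyMeasurable v)
    · exact integrable_efun_mul v (by simp only [mem_setOf_eq] at hz₀; linarith)
    · exact ((Continuous.mul (by continuity) (Complex.continuous_exp.comp (by continuity))).aestronglyMeasurable).mul
        (Lp.aestronglyMeasurable v)
    · -- bound
      filter_upwards [(ae_restrict_mem measurableSet_Ioi : ∀ᵐ t ∂μ0, t ∈ Ioi (0:ℝ))]
        with t ht z hzball
      have htpos : 0 < t := ht
      have him : z₀.im - ε < z.im := by
        have h2 : ‖z - z₀‖ < ε := by
          rw [Metric.mem_ball, Complex.dist_eq] at hzball; exact hzball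
        have h3 := abs_lt.mp (lt_of_le_of_lt (Complex.abs_im_le_norm (z - z₀)) h2)
        simp only [Complex.sub_im] at h3
        linarith [h3.1]
      have him_wb : wb.im = ε/2 - 2⁻¹ := by rw [hwb]; simp
      have hnz : ‖I * (t:ℂ) * efun z t * ((v:ℝ→ℂ) t)‖
          = t * (Real.exp ((-z.im - 2⁻¹) * t) * ‖(v:ℝ→ℂ) t‖) := by
        rw [norm_mul, norm_mul, norm_mul, Complex.norm_I, one_mul, Complex.norm_real,
          Real.norm_eq_abs, abs_of_pos htpos, norm_efun]
        ring
      have hnb : ‖efun wb t * ((v:ℝ→ℂ) t)‖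
          = Real.exp ((-(ε/2 - 2⁻¹) - 2⁻¹) * t) * ‖(v:ℝ→ℂ) t‖ := by
        rw [norm_mul, norm_efun, him_wb]
      rw [hnz, hnb]
      have hexp : t * Real.exp ((-z.im - 2⁻¹) * t) ≤ (2/ε) * Real.exp ((-(ε/2 - 2⁻¹) - 2⁻¹) * t) := by
        have hz2 : -z.im - 2⁻¹ < -ε := by
          simp only [hε] at him ⊢
          simp only [mem_setOf_eq] at hz₀
          linarith
        have e1 : t * Real.exp ((-z.im - 2⁻¹) * t) ≤ t * Real.exp (-ε * t) := by
          apply mul_le_mul_of_nonneg_left _ htpos.le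
          exact Real.exp_le_exp.mpr (by nlinarith)
        have e2 : t ≤ (2/ε) * Real.exp ((ε/2) * t) := by
          have := Real.add_one_le_exp ((ε/2) * t)
          rw [div_mul_eq_mul_div, le_div_iff₀ hεpos]
          nlinarith [Real.exp_pos ((ε/2)*t)]
        have e3 : t * Real.exp (-ε * t) ≤ (2/ε) * Real.exp ((ε/2) * t) * Real.exp (-ε * t) :=
          mul_le_mul_of_nonneg_right e2 (Real.exp_pos _).le
        rw [show (-(ε/2 - 2⁻¹) - 2⁻¹) * t = (ε/2) * t + (-ε * t) by ring, Real.exp_add]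
        calc t * Real.exp ((-z.im - 2⁻¹) * t) ≤ t * Real.exp (-ε * t) := e1
          _ ≤ (2/ε) * (Real.exp ((ε/2) * t) * Real.exp (-ε * t)) := by
              rw [← mul_assoc]; exact e3
      calc t * (Real.exp ((-z.im - 2⁻¹) * t) * ‖(v : ℝ → ℂ) t‖)
          = (t * Real.exp ((-z.im - 2⁻¹) * t)) * ‖(v : ℝ → ℂ) t‖ := by ring
        _ ≤ ((2/ε) * Real.exp ((-(ε/2 - 2⁻¹) - 2⁻¹) * t)) * ‖(v : ℝ → ℂ) t‖ := by
            apply mul_le_mul_of_nonneg_right hexp (norm_nonneg _)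
        _ = 2 / ε * (Real.exp ((-(ε/2 - 2⁻¹) - 2⁻¹) * t) * ‖(v : ℝ → ℂ) t‖) := by ring
    · -- differentiability
      filter_upwards with t z _
      have : HasDerivAt (fun z : ℂ => efun z t) ((I * t) * efun z t) z := by
        have hlin : HasDerivAt (fun z : ℂ => (I * z - 2⁻¹) * t) (I * t) z := by
          have h0 : HasDerivAt (fun z : ℂ => (I * z - 2⁻¹) * t)
              ((I * 1) * t) z := (((hasDerivAt_id z).const_mul I).sub_const 2⁻¹).mul_const _
          simpa using h0
        simpa [efun, mul_comm, mul_assoc, mul_left_comm] using hlin.cexp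
      exact this.mul_const _
  have heq : Fn v =ᶠ[nhds z₀] fun z => ∫ t, efun z t * (v : ℝ → ℂ) t ∂μ0 := by
    filter_upwards [hopen.mem_nhds hz₀] with z hz
    exact Fn_integral v hz
  rw [EventuallyEq.differentiableAt_iff heq]
  exact key.differentiableAt


def Bt (B : ℂ → ℂ) (w : ℂ) : ℂ := conj (B (-(conj w)))

variable {B : ℂ → ℂ}

section
variable (hpos : ∀ r : ℕ, 0 < r → ∀ w : Fin r → ℂ, (∀ α, 0 < (w α).im) → ∀ c : Fin r → ℂ,
      0 ≤ ∑ α, ∑ β, c α * conj (c β) *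
        ((1 - B (w α) * conj (B (w β))) / (2 * Real.pi * I * (conj (w β) - w α - I))))

include hpos in
lemma contraction_fin (r : ℕ) (w : Fin r → ℂ) (hw : ∀ i, 0 < (w i).im) (c : Fin r → ℂ) :
    ‖∑ i, (c i * Bt B (w i)) • eV (w i)‖ ≤ ‖∑ i, c i • eV (w i)‖ := by
  rcases Nat.eq_zero_or_pos r with hr | hr
  · subst hr; simp
  set f := ∑ i, c i • eV (w i) with hf
  set g := ∑ i, (c i * Bt B (w i)) • eV (w i) with hg
  have key : ‖g‖^2 ≤ ‖f‖^2 := by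
    have h0 := hpos r hr (fun i => -(conj (w i))) (fun i => by simpa using hw i)
      (fun i => conj (c i))
    have hterm : ∀ α β : Fin r, conj (c α) * conj (conj (c β)) *
        ((1 - B (-(conj (w α))) * conj (B (-(conj (w β))))) /
          (2 * Real.pi * I * (conj (-(conj (w β))) - (-(conj (w α))) - I)))
        = ((2 * Real.pi : ℝ) : ℂ)⁻¹ *
          ((conj (c α) * (c β * (inner ℂ (eV (w α)) (eV (w β)) : ℂ))) -
           (conj (c α * Bt B (w α)) * ((c β * Bt B (w β)) * (inner ℂ (eV (w α)) (eV (w β)) : ℂ)))) := by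
      intro α β
      have hK : (inner ℂ (eV (w α)) (eV (w β)) : ℂ) = (1 + I * (conj (w α)) - I * (w β))⁻¹ :=
        inner_eV (by linarith [hw α]) (by linarith [hw β])
      have hKne : (1 : ℂ) + I * (conj (w α)) - I * (w β) ≠ 0 := by
        intro h
        have : ((1 : ℂ) + I * (conj (w α)) - I * (w β)).re = 0 := by rw [h]; rfl
        simp only [Complex.sub_re, Complex.add_re, Complex.one_re, Complex.mul_re,
          Complex.I_re, Complex.I_im, Complex.conj_re, Complex.conj_im] at this
        have := hw α; have := hw β
        linarith [hw α, hw β]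
      have hden : 2 * (Real.pi : ℂ) * I * (conj (-(conj (w β))) - (-(conj (w α))) - I)
          = 2 * (Real.pi : ℂ) * (1 + I * (conj (w α)) - I * (w β)) := by
        have : conj (-(conj (w β))) = -(w β) := by simp
        rw [this]
        have hI : (I : ℂ) * I = -1 := Complex.I_mul_I
        ring_nf
        rw [Complex.I_sq]
        ring
      have hBa : B (-(conj (w α))) = conj (Bt B (w α)) := by rw [Bt, conj_conj]
      have hBb : conj (B (-(conj (w β)))) = Bt B (w β) := rfl
      rw [hK, hden, hBa, hBb, conj_conj, map_mul]
      have hπ : ((2 * Real.pi : ℝ) : ℂ) ≠ 0 := by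
        simp [Real.pi_ne_zero]
      push_cast
      field_simp
    have hff : (inner ℂ f f : ℂ) = ∑ α, ∑ β, conj (c α) * (c β * (inner ℂ (eV (w α)) (eV (w β)) : ℂ)) := by
      simp only [hf, sum_inner, inner_sum, inner_smul_left, inner_smul_right, Finset.mul_sum]
      rw [Finset.sum_comm]
      exact Finset.sum_congr rfl fun α _ => Finset.sum_congr rfl fun β _ => by ring
    have hgg : (inner ℂ g g : ℂ) = ∑ α, ∑ β, conj (c α * Bt B (w α)) *
        ((c β * Bt B (w β)) * (inner ℂ (eV (w α)) (eV (w β)) : ℂ)) := by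
      simp only [hg, sum_inner, inner_sum, inner_smul_left, inner_smul_right, Finset.mul_sum]
      rw [Finset.sum_comm]
      exact Finset.sum_congr rfl fun α _ => Finset.sum_congr rfl fun β _ => by ring
    have hsum : (∑ α, ∑ β, conj (c α) * conj (conj (c β)) *
        ((1 - B (-(conj (w α))) * conj (B (-(conj (w β))))) /
          (2 * Real.pi * I * (conj (-(conj (w β))) - (-(conj (w α))) - I))))
        = ((2 * Real.pi : ℝ) : ℂ)⁻¹ * ((inner ℂ f f : ℂ) - (inner ℂ g g : ℂ)) := by
      rw [hff, hgg]
      rw [Finset.sum_congr rfl (fun α _ => Finset.sum_congr rfl (fun β _ => hterm α β))]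
      rw [← Finset.sum_sub_distrib, Finset.mul_sum]
      apply Finset.sum_congr rfl
      intro α _
      rw [mul_sub, Finset.mul_sum, Finset.mul_sum, ← Finset.sum_sub_distrib]
      exact Finset.sum_congr rfl fun β _ => mul_sub _ _ _
    rw [hsum] at h0
    have hffr : (inner ℂ f f : ℂ) = ((‖f‖^2 : ℝ) : ℂ) := by
      rw [inner_self_eq_norm_sq_to_K]; norm_cast
    have hggr : (inner ℂ g g : ℂ) = ((‖g‖^2 : ℝ) : ℂ) := by
      rw [inner_self_eq_norm_sq_to_K]; norm_cast
    rw [hffr, hggr, show ((2 * Real.pi : ℝ) : ℂ)⁻¹ * (((‖f‖^2 : ℝ) : ℂ) - ((‖g‖^2 : ℝ) : ℂ))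
      = (((2 * Real.pi)⁻¹ * (‖f‖^2 - ‖g‖^2) : ℝ) : ℂ) by push_cast; ring] at h0
    have h0r : (0:ℝ) ≤ (2 * Real.pi)⁻¹ * (‖f‖^2 - ‖g‖^2) := by
      exact_mod_cast Complex.zero_le_real.mp h0
    have hπ : (0:ℝ) < (2 * Real.pi)⁻¹ := by positivity
    nlinarith
  have h2 := Real.sqrt_le_sqrt key
  rwa [Real.sqrt_sq (norm_nonneg _), Real.sqrt_sq (norm_nonneg _)] at h2

include hpos in
lemma contraction_pow (n : ℕ) (r : ℕ) (w : Fin r → ℂ) (hw : ∀ i, 0 < (w i).im) (c : Fin r → ℂ) :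
    ‖∑ i, (c i * (Bt B (w i))^n) • eV (w i)‖ ≤ ‖∑ i, c i • eV (w i)‖ := by
  induction n generalizing c with
  | zero => simp
  | succ n ih =>
    calc ‖∑ i, (c i * (Bt B (w i))^(n+1)) • eV (w i)‖
        = ‖∑ i, ((c i * Bt B (w i)) * (Bt B (w i))^n) • eV (w i)‖ := by
          congr 1; exact Finset.sum_congr rfl fun i _ => by ring_nf
      _ ≤ ‖∑ i, (c i * Bt B (w i)) • eV (w i)‖ := ih _
      _ = ‖∑ i, ((c i) * (Bt B (w i))^1) • eV (w i)‖ := by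
          congr 1; exact Finset.sum_congr rfl fun i _ => by ring_nf
      _ ≤ ‖∑ i, c i • eV (w i)‖ := by
          have := contraction_fin hpos r w hw c
          calc ‖∑ i, ((c i) * (Bt B (w i))^1) • eV (w i)‖
              = ‖∑ i, ((c i) * (Bt B (w i))) • eV (w i)‖ := by
                congr 1; exact Finset.sum_congr rfl fun i _ => by ring_nf
            _ ≤ _ := this

/-- upper half plane index type -/
def U : Type := {w : ℂ // 0 < w.im}

include hpos in
lemma contraction_finsupp (n : ℕ) (c : U →₀ ℂ) :
    ‖(Finsupp.linearCombination ℂ (fun u : U => ((Bt B u.1)^n) • eV u.1)) c‖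
      ≤ ‖(Finsupp.linearCombination ℂ (fun u : U => eV u.1)) c‖ := by
  classical
  rw [Finsupp.linearCombination_apply, Finsupp.linearCombination_apply, Finsupp.sum, Finsupp.sum]
  set s := c.support
  have h1 : ∑ u ∈ s, c u • ((Bt B u.1)^n) • eV u.1
      = ∑ u ∈ s, ((c u) * (Bt B u.1)^n) • eV u.1 :=
    Finset.sum_congr rfl fun u _ => by rw [smul_smul]
  rw [h1]
  rw [← Finset.sum_coe_sort (s := s) (f := fun u => ((c u) * (Bt B u.1)^n) • eV u.1),
      ← Finset.sum_coe_sort (s := s) (f := fun u => (c u) • eV u.1)]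
  rw [← Equiv.sum_comp s.equivFin.symm (fun u => ((c u.1) * (Bt B u.1.1)^n) • eV u.1.1),
      ← Equiv.sum_comp s.equivFin.symm (fun u => (c u.1) • eV u.1.1)]
  exact contraction_pow hpos n s.card (fun a => ((s.equivFin.symm a) : U).1)
    (fun a => ((s.equivFin.symm a) : U).2) (fun a => c (s.equivFin.symm a))

include hpos in
lemma exists_vn (n : ℕ) : ∃ v : Lp ℂ 2 μ0, ‖v‖ ≤ ‖eV I‖ ∧
    ∀ w : ℂ, 0 < w.im → (inner ℂ v (eV w) : ℂ) = (Bt B w)^n * (inner ℂ (eV I) (eV w) : ℂ) := by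
  classical
  set E := Lp ℂ 2 μ0
  set Φ : (U →₀ ℂ) →ₗ[ℂ] E := Finsupp.linearCombination ℂ (fun u => eV u.1) with hΦ
  set Ψ : (U →₀ ℂ) →ₗ[ℂ] E := Finsupp.linearCombination ℂ (fun u => ((Bt B u.1)^n) • eV u.1) with hΨ
  set ℓ : (U →₀ ℂ) →ₗ[ℂ] ℂ := (innerSL ℂ (eV I)).toLinearMap.comp Ψ with hℓ
  have hbdd : ∀ c : U →₀ ℂ, ‖ℓ c‖ ≤ ‖eV I‖ * ‖Φ c‖ := by
    intro c
    calc ‖ℓ c‖ = ‖(inner ℂ (eV I) (Ψ c) : ℂ)‖ := rfl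
      _ ≤ ‖eV I‖ * ‖Ψ c‖ := norm_inner_le_norm _ _
      _ ≤ ‖eV I‖ * ‖Φ c‖ := by
          apply mul_le_mul_of_nonneg_left _ (norm_nonneg _)
          exact contraction_finsupp hpos n c
  have hker : LinearMap.ker Φ ≤ LinearMap.ker ℓ := by
    intro c hc
    rw [LinearMap.mem_ker] at hc ⊢
    have := hbdd c
    rw [hc, norm_zero, mul_zero] at this
    exact norm_le_zero_iff.mp this
  set Lq : ((U →₀ ℂ) ⧸ LinearMap.ker Φ) →ₗ[ℂ] ℂ := Submodule.liftQ _ ℓ hker with hLq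
  set eqv := Φ.quotKerEquivRange with heqv
  set L : LinearMap.range Φ →ₗ[ℂ] ℂ := Lq.comp (eqv.symm.toLinearMap) with hL
  have hLval : ∀ c : U →₀ ℂ, L ⟨Φ c, LinearMap.mem_range_self Φ c⟩ = ℓ c := by
    intro c
    have h1 : eqv (Submodule.Quotient.mk c) = ⟨Φ c, LinearMap.mem_range_self Φ c⟩ :=
      Subtype.ext (Φ.quotKerEquivRange_apply_mk c)
    have h2 : eqv.symm ⟨Φ c, LinearMap.mem_range_self Φ c⟩ = Submodule.Quotient.mk c := by
      rw [← h1, LinearEquiv.symm_apply_apply]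
    rw [hL]
    simp only [LinearMap.comp_apply, LinearEquiv.coe_toLinearMap, h2]
    exact Submodule.liftQ_apply _ ℓ _
  have hLbdd : ∀ x : LinearMap.range Φ, ‖L x‖ ≤ ‖eV I‖ * ‖x‖ := by
    rintro ⟨x, hx⟩
    obtain ⟨c, rfl⟩ := LinearMap.mem_range.mp hx
    rw [hLval c]
    exact hbdd c
  set Lc : (LinearMap.range Φ) →L[ℂ] ℂ := LinearMap.mkContinuous L ‖eV I‖ hLbdd with hLc
  obtain ⟨G, hGeq, hGnorm⟩ := exists_extension_norm_eq (LinearMap.range Φ) Lc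
  set v := (InnerProductSpace.toDual ℂ E).symm G with hv
  refine ⟨v, ?_, ?_⟩
  · have h1 : ‖v‖ = ‖G‖ := LinearIsometryEquiv.norm_map _ _
    rw [h1, hGnorm]
    exact LinearMap.mkContinuous_norm_le L (norm_nonneg _) hLbdd
  · intro w hw
    have hmem : eV w ∈ LinearMap.range Φ := by
      refine ⟨Finsupp.single ⟨w, hw⟩ 1, ?_⟩
      rw [hΦ]; exact (Finsupp.linearCombination_single _ _ _).trans (one_smul _ _)
    have h1 : (inner ℂ v (eV w) : ℂ) = G (eV w) := InnerProductSpace.toDual_symm_apply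
    rw [h1]
    have h2 : G (eV w) = Lc ⟨eV w, hmem⟩ := hGeq ⟨eV w, hmem⟩
    rw [h2]
    have h3 : Lc ⟨eV w, hmem⟩ = ℓ (Finsupp.single ⟨w, hw⟩ 1) := by
      have heq2 : (⟨eV w, hmem⟩ : LinearMap.range Φ)
          = ⟨Φ (Finsupp.single ⟨w, hw⟩ 1), LinearMap.mem_range_self _ _⟩ := by
        apply Subtype.ext
        show eV w = Φ (Finsupp.single ⟨w, hw⟩ 1)
        rw [hΦ]; exact ((Finsupp.linearCombination_single ℂ (v := fun u : U => eV u.1) (1:ℂ) (⟨w, hw⟩ : U)).trans (one_smul ℂ (eV w))).symm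
      rw [hLc]
      show L ⟨eV w, hmem⟩ = _
      rw [heq2, hLval]
    rw [h3, hℓ]
    simp only [LinearMap.comp_apply, ContinuousLinearMap.coe_coe, hΨ, Finsupp.linearCombination_single,
      one_smul, innerSL_apply_apply]
    have h4 : (Finsupp.linearCombination ℂ (fun u : U => Bt B u.1 ^ n • eV u.1)) (Finsupp.single ⟨w, hw⟩ 1)
        = Bt B w ^ n • eV w := (Finsupp.linearCombination_single ℂ _ _).trans (one_smul ℂ _)
    exact (congrArg (inner ℂ (eV I)) h4).trans (inner_smul_right _ _ _)
end

end S7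
end

open S7 in
theorem stmt_7 (B : ℂ → ℂ)
    (hB : DifferentiableOn ℂ B {z : ℂ | 0 < z.im})
    (hB1 : ∀ z : ℂ, 0 < z.im → ‖B z‖ ≤ 1)
    (hpos : ∀ r : ℕ, 0 < r → ∀ w : Fin r → ℂ, (∀ α, 0 < (w α).im) → ∀ c : Fin r → ℂ,
      0 ≤ ∑ α, ∑ β, c α * conj (c β) *
        ((1 - B (w α) * conj (B (w β))) / (2 * Real.pi * I * (conj (w β) - w α - I)))) :
    ∃ g : ℂ → ℂ, DifferentiableOn ℂ g {z : ℂ | -(1 / 2) < z.im} ∧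
      (∀ z : ℂ, 0 < z.im → g z = B z) ∧
      ∀ z : ℂ, -(1 / 2) < z.im → ‖g z‖ ≤ 1 := by
  have hhalf : ∀ z : ℂ, (-(1 / 2 : ℝ) < z.im) ↔ (-2⁻¹ < z.im) := by
    intro z; norm_num
  have hΩ : {z : ℂ | -(1 / 2 : ℝ) < z.im} = {z : ℂ | -2⁻¹ < z.im} := by
    ext z; simp only [mem_setOf_eq]; exact hhalf z
  have hopen : IsOpen {z : ℂ | -2⁻¹ < z.im} := isOpen_lt continuous_const Complex.continuous_im
  choose v hv1 hv2 using fun n => exists_vn hpos n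
  set g : ℂ → ℂ := fun z => (2 - I*z) * Fn (v 1) z with hgdef
  -- key pointwise formula on the upper half plane
  have hFn : ∀ n : ℕ, ∀ z : ℂ, 0 < z.im → Fn (v n) z = (B z)^n * (2 - I*z)⁻¹ := by
    intro n z hz
    have hz' : 0 < (-(conj z)).im := by simpa using hz
    have h1 : Fn (v n) z = conj (inner ℂ (v n) (eV (-(conj z))) : ℂ) := by
      rw [Fn, ← inner_conj_symm]
    rw [h1, hv2 n (-(conj z)) hz']
    rw [map_mul, map_pow]
    have h2 : conj (Bt B (-(conj z))) = B z := by
      rw [Bt, conj_conj]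
      congr 1
      simp
    rw [h2]
    have h3 : conj (inner ℂ (eV I) (eV (-(conj z))) : ℂ) = Fn (eV I) z := by
      rw [Fn, inner_conj_symm]
    rw [h3, Fn_eV_I (by rw [← hhalf z]; norm_num; linarith)]
  have hgB : ∀ z : ℂ, 0 < z.im → g z = B z := by
    intro z hz
    have h1 := hFn 1 z hz
    rw [hgdef]
    simp only
    rw [h1, pow_one]
    have hne := two_sub_I_mul_ne (z := z) (by norm_num; linarith)
    field_simp
  have hdiff : DifferentiableOn ℂ g {z : ℂ | -2⁻¹ < z.im} := by
    apply DifferentiableOn.mul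
    · exact (differentiable_const (2:ℂ)).differentiableOn.sub
        ((differentiable_id.const_mul I).differentiableOn)
    · exact Fn_differentiableOn (v 1)
  -- identity theorem
  have hEq : ∀ n : ℕ, EqOn (Fn (v n)) (fun z => (g z)^n * (2 - I*z)⁻¹) {z : ℂ | -2⁻¹ < z.im} := by
    intro n
    have ha1 : AnalyticOnNhd ℂ (Fn (v n)) {z : ℂ | -2⁻¹ < z.im} :=
      (Fn_differentiableOn (v n)).analyticOnNhd hopen
    have ha2 : AnalyticOnNhd ℂ (fun z => (g z)^n * (2 - I*z)⁻¹) {z : ℂ | -2⁻¹ < z.im} := by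
      apply DifferentiableOn.analyticOnNhd _ hopen
      apply DifferentiableOn.mul (hdiff.pow n)
      apply DifferentiableOn.inv
      · exact (differentiable_const (2:ℂ)).differentiableOn.sub
          ((differentiable_id.const_mul I).differentiableOn)
      · intro x hx; exact two_sub_I_mul_ne hx
    have hpre : IsPreconnected {z : ℂ | -2⁻¹ < z.im} :=
      (convex_halfSpace_im_gt (-2⁻¹ : ℝ)).isPreconnected
    have hImem : (I : ℂ) ∈ {z : ℂ | -2⁻¹ < z.im} := by norm_num [Complex.I_im]
    apply ha1.eqOn_of_preconnected_of_eventuallyEq ha2 hpre hImem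
    have hopen0 : IsOpen {z : ℂ | 0 < z.im} := isOpen_lt continuous_const Complex.continuous_im
    filter_upwards [hopen0.mem_nhds (by norm_num [Complex.I_im] : (I:ℂ) ∈ {z : ℂ | 0 < z.im})]
      with z hz
    rw [hFn n z hz, hgB z hz]
  refine ⟨g, by rw [hΩ]; exact hdiff, hgB, ?_⟩
  intro z hz
  rw [hhalf z] at hz
  by_contra hgt
  push_neg at hgt
  set M : ℝ := ‖eV (-(conj z))‖ * ‖eV I‖ * ‖2 - I*z‖ with hM
  have hbd : ∀ n : ℕ, (‖g z‖)^n ≤ M := by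
    intro n
    have h1 : (g z)^n = Fn (v n) z * (2 - I*z) := by
      have := hEq n hz
      simp only at this
      rw [this]
      field_simp [two_sub_I_mul_ne hz]
    have h2 : ‖Fn (v n) z‖ ≤ ‖eV (-(conj z))‖ * ‖eV I‖ := by
      rw [Fn]
      calc ‖(inner ℂ (eV (-(conj z))) (v n) : ℂ)‖
          = ‖(inner ℂ (eV (-(conj z))) (v n) : ℂ)‖ := rfl
        _ ≤ ‖eV (-(conj z))‖ * ‖v n‖ := norm_inner_le_norm _ _
        _ ≤ ‖eV (-(conj z))‖ * ‖eV I‖ :=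
            mul_le_mul_of_nonneg_left (hv1 n) (norm_nonneg _)
    calc (‖g z‖)^n = ‖(g z)^n‖ := (norm_pow _ _).symm
      _ = ‖Fn (v n) z‖ * ‖2 - I*z‖ := by rw [h1, norm_mul]
      _ ≤ (‖eV (-(conj z))‖ * ‖eV I‖) * ‖2 - I*z‖ :=
          mul_le_mul_of_nonneg_right h2 (norm_nonneg _)
      _ = M := by rw [hM]
  obtain ⟨n, hn⟩ := pow_unbounded_of_one_lt M hgt
  exact absurd (hbd n) (not_le.mpr hn)
end
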